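/- arXiv:2412.13665 — 5 statements merged into one kernel-verified Lean document; each statement's English description precedes it below -/
import Mathlib

section
/- Let D ≥ 1, σ > 0, and for each t ∈ [0,1] let p_t : ℝ^D → ℝ be a continuously differentiable strictly positive probability density. Let μ : ℝ^D × [0,1] → ℝ^D be continuous and define φ*(x,t) = −μ(x,t) + σ² ∇_x log p_t(x). For continuously differentiable φ : ℝ^D × [0,1] → ℝ^D define the cost functional L[φ] = ∫₀¹ ∫_{ℝ^D} p_t(x) ( ‖φ(x,t)‖² + 2 ⟪μ(x,t), φ(x,t)⟫ + 2 σ² tr J_φ(x,t) ) dx dt, where J_φ denotes the Jacobian of φ(·,t) and tr its trace. Assume φ and φ* are such that all integrands above are integrable and that for a.e. t ∈ [0,1] the divergence identity ∫_{ℝ^D} ( p_t(x) tr J_φ(x,t) + ⟪φ(x,t), ∇p_t(x)⟫ ) dx = 0 holds (e.g. φ(·,t) − φ*(·,t) compactly supported, or sufficient decay at infinity), and likewise for φ*. Then L[φ] ≥ L[φ*]; that is, the functional L is minimized by φ = −μ + σ² ∇_x log p_t. -/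
open MeasureTheory
open scoped RealInnerProductSpace

/-- The divergence (trace of the Jacobian) of a vector field `f : ℝ^D → ℝ^D`:
`tr J_f(x) = ∑ i ∂_i f_i(x)`. -/
noncomputable def divg {D : ℕ}
    (f : EuclideanSpace ℝ (Fin D) → EuclideanSpace ℝ (Fin D))
    (x : EuclideanSpace ℝ (Fin D)) : ℝ :=
  ∑ i, fderiv ℝ f x (EuclideanSpace.single i 1) i

/-- `p • ∇ log p = ∇ p` for positive differentiable `p`. -/
lemma smul_gradient_log {D : ℕ} (p : EuclideanSpace ℝ (Fin D) → ℝ)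
    (hp : ContDiff ℝ 1 p) (hpos : ∀ x, 0 < p x) (x : EuclideanSpace ℝ (Fin D)) :
    p x • gradient (fun y => Real.log (p y)) x = gradient p x := by
  have hd : DifferentiableAt ℝ p x := (hp.differentiable one_ne_zero) x
  have hlog : HasFDerivAt (fun y => Real.log (p y)) ((p x)⁻¹ • fderiv ℝ p x) x :=
    hd.hasFDerivAt.log (hpos x).ne'
  have : gradient (fun y => Real.log (p y)) x = (p x)⁻¹ • gradient p x := by
    unfold gradient
    rw [hlog.fderiv]
    exact _root_.map_smul _ _ _
  rw [this, smul_smul, mul_inv_cancel₀ (hpos x).ne', one_smul]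

/-- Key per-time identity: the inner cost integral equals
`∫ p ‖f - s‖² - ∫ p ‖s‖²` where `s = -μ + σ² ∇ log p`. -/
lemma key_identity {D : ℕ} (σ : ℝ) (p : EuclideanSpace ℝ (Fin D) → ℝ)
    (hp : ContDiff ℝ 1 p) (hpos : ∀ x, 0 < p x)
    (μ f s : EuclideanSpace ℝ (Fin D) → EuclideanSpace ℝ (Fin D))
    (hs : ∀ x, s x = -μ x + σ ^ 2 • gradient (fun y => Real.log (p y)) x)
    (h1 : Integrable (fun x => p x * ‖f x‖ ^ 2))
    (h2 : Integrable (fun x => p x * ⟪μ x, f x⟫))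
    (h3 : Integrable (fun x => p x * divg f x))
    (h4 : Integrable (fun x => ⟪f x, gradient p x⟫))
    (h5 : Integrable (fun x => p x * ‖s x‖ ^ 2))
    (hdiv : ∫ x, (p x * divg f x + ⟪f x, gradient p x⟫) = 0) :
    ∫ x, p x * (‖f x‖ ^ 2 + 2 * ⟪μ x, f x⟫ + 2 * σ ^ 2 * divg f x)
      = (∫ x, p x * ‖f x - s x‖ ^ 2) - ∫ x, p x * ‖s x‖ ^ 2 := by
  -- the divergence identity gives ∫ p div f = - ∫ ⟪f, ∇p⟫
  have hdiv' : ∫ x, p x * divg f x = - ∫ x, ⟪f x, gradient p x⟫ := by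
    have := integral_add h3 h4
    rw [hdiv] at this
    linarith
  -- pointwise: p ‖f - s‖² = p ‖f‖² + 2 p ⟪μ, f⟫ - 2σ² ⟪f, ∇p⟫ + p ‖s‖²
  have hpt : ∀ x, p x * ‖f x - s x‖ ^ 2
      = p x * ‖f x‖ ^ 2 + 2 * (p x * ⟪μ x, f x⟫)
        - 2 * σ ^ 2 * ⟪f x, gradient p x⟫ + p x * ‖s x‖ ^ 2 := by
    intro x
    have hgrad : ⟪f x, gradient p x⟫
        = p x * ⟪f x, gradient (fun y => Real.log (p y)) x⟫ := by
      rw [← smul_gradient_log p hp hpos x, real_inner_smul_right]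
    have hexp : ‖f x - s x‖ ^ 2 = ‖f x‖ ^ 2 - 2 * ⟪f x, s x⟫ + ‖s x‖ ^ 2 := by
      rw [@norm_sub_sq_real]
    have hfs : ⟪f x, s x⟫ = -⟪μ x, f x⟫
        + σ ^ 2 * ⟪f x, gradient (fun y => Real.log (p y)) x⟫ := by
      rw [hs x, inner_add_right, inner_neg_right, real_inner_smul_right,
        real_inner_comm (f x) (μ x)]
    rw [hexp, hfs, hgrad]; ring
  have hA : Integrable (fun x => p x * ‖f x‖ ^ 2 + 2 * (p x * ⟪μ x, f x⟫)) :=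
    h1.add (h2.const_mul 2)
  have hB : Integrable (fun x => 2 * σ ^ 2 * (p x * divg f x)) :=
    h3.const_mul (2 * σ ^ 2)
  have hC : Integrable (fun x => 2 * σ ^ 2 * ⟪f x, gradient p x⟫) :=
    h4.const_mul (2 * σ ^ 2)
  have hAC : Integrable (fun x => p x * ‖f x‖ ^ 2 + 2 * (p x * ⟪μ x, f x⟫)
      - 2 * σ ^ 2 * ⟪f x, gradient p x⟫) := hA.sub hC
  -- split the LHS integral
  have hLHS : ∫ x, p x * (‖f x‖ ^ 2 + 2 * ⟪μ x, f x⟫ + 2 * σ ^ 2 * divg f x)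
      = (∫ x, p x * ‖f x‖ ^ 2) + 2 * (∫ x, p x * ⟪μ x, f x⟫)
        + 2 * σ ^ 2 * ∫ x, p x * divg f x := by
    have heq : (fun x => p x * (‖f x‖ ^ 2 + 2 * ⟪μ x, f x⟫ + 2 * σ ^ 2 * divg f x))
        = fun x => (p x * ‖f x‖ ^ 2 + 2 * (p x * ⟪μ x, f x⟫))
          + 2 * σ ^ 2 * (p x * divg f x) := by
      funext x; ring
    rw [heq, integral_add hA hB, integral_add h1 (h2.const_mul 2),
      integral_const_mul, integral_const_mul]
  -- split the RHS: ∫ p‖f-s‖² = ∫ p‖f‖² + 2∫p⟪μ,f⟫ - 2σ²∫⟪f,∇p⟫ + ∫p‖s‖²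
  have hRHS : ∫ x, p x * ‖f x - s x‖ ^ 2
      = (∫ x, p x * ‖f x‖ ^ 2) + 2 * (∫ x, p x * ⟪μ x, f x⟫)
        - 2 * σ ^ 2 * (∫ x, ⟪f x, gradient p x⟫) + ∫ x, p x * ‖s x‖ ^ 2 := by
    calc ∫ x, p x * ‖f x - s x‖ ^ 2
        = ∫ x, (p x * ‖f x‖ ^ 2 + 2 * (p x * ⟪μ x, f x⟫)
            - 2 * σ ^ 2 * ⟪f x, gradient p x⟫ + p x * ‖s x‖ ^ 2) :=
          integral_congr_ae (Filter.Eventually.of_forall hpt)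
      _ = _ := by
          rw [integral_add hAC h5, integral_sub hA hC,
            integral_add h1 (h2.const_mul 2), integral_const_mul,
            integral_const_mul]
  rw [hLHS, hdiv']
  rw [hRHS]
  ring

/-- **The score-matching cost functional is minimized by `φ* = -μ + σ² ∇ log p`.**
For `C¹` strictly positive probability densities `p t`, a continuous drift `μ`, a `C¹`
candidate `φ` and `φ*(x,t) = -μ(x,t) + σ² ∇ₓ log p_t(x)`, under integrability of all
integrands and the divergence identity
`∫ (p_t tr J_f + ⟪f, ∇p_t⟫) dx = 0` for a.e. `t` (for both `f = φ` and `f = φ*`),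
one has `L[φ*] ≤ L[φ]` where
`L[f] = ∫₀¹ ∫ p_t(x) (‖f‖² + 2⟪μ, f⟫ + 2σ² tr J_f) dx dt`. -/
theorem costFunctional_minimized_by_reverse_drift
    (D : ℕ) (hD : 1 ≤ D) (σ : ℝ) (hσ : 0 < σ)
    (p : ℝ → EuclideanSpace ℝ (Fin D) → ℝ)
    (hp_diff : ∀ t ∈ Set.Icc (0:ℝ) 1, ContDiff ℝ 1 (p t))
    (hp_pos : ∀ t ∈ Set.Icc (0:ℝ) 1, ∀ x, 0 < p t x)
    (hp_prob : ∀ t ∈ Set.Icc (0:ℝ) 1, ∫ x, p t x = 1)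
    (μ : EuclideanSpace ℝ (Fin D) → ℝ → EuclideanSpace ℝ (Fin D))
    (hμ_cont : Continuous fun q : EuclideanSpace ℝ (Fin D) × ℝ => μ q.1 q.2)
    (φ φs : EuclideanSpace ℝ (Fin D) → ℝ → EuclideanSpace ℝ (Fin D))
    (hφs : ∀ x t, φs x t
      = -μ x t + σ ^ 2 • gradient (fun y => Real.log (p t y)) x)
    (hφ_diff : ContDiffOn ℝ 1 (fun q : EuclideanSpace ℝ (Fin D) × ℝ => φ q.1 q.2)
      (Set.univ ×ˢ Set.Icc (0:ℝ) 1))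
    -- integrability in `x` of every integrand appearing above, for both `φ` and `φ*`
    (hInt : ∀ f ∈ ({φ, φs} :
        Set (EuclideanSpace ℝ (Fin D) → ℝ → EuclideanSpace ℝ (Fin D))),
      ∀ t ∈ Set.Icc (0:ℝ) 1,
        Integrable (fun x => p t x * ‖f x t‖ ^ 2) ∧
        Integrable (fun x => p t x * ⟪μ x t, f x t⟫) ∧
        Integrable (fun x => p t x * divg (fun y => f y t) x) ∧
        Integrable (fun x => ⟪f x t, gradient (p t) x⟫))
    -- integrability in `t` of the corresponding time integrands
    (hIntT : ∀ f ∈ ({φ, φs} :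
        Set (EuclideanSpace ℝ (Fin D) → ℝ → EuclideanSpace ℝ (Fin D))),
      IntegrableOn (fun t => ∫ x, p t x * ‖f x t‖ ^ 2) (Set.Icc (0:ℝ) 1) ∧
      IntegrableOn (fun t => ∫ x, p t x * ⟪μ x t, f x t⟫) (Set.Icc (0:ℝ) 1) ∧
      IntegrableOn (fun t => ∫ x, p t x * divg (fun y => f y t) x) (Set.Icc (0:ℝ) 1))
    -- the divergence identity, for a.e. `t ∈ [0,1]`, for both `φ` and `φ*`
    (hdiv : ∀ f ∈ ({φ, φs} :
        Set (EuclideanSpace ℝ (Fin D) → ℝ → EuclideanSpace ℝ (Fin D))),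
      ∀ᵐ t ∂(volume.restrict (Set.Icc (0:ℝ) 1)),
        ∫ x, (p t x * divg (fun y => f y t) x + ⟪f x t, gradient (p t) x⟫) = 0) :
    ∫ t in Set.Icc (0:ℝ) 1, ∫ x,
        p t x * (‖φs x t‖ ^ 2 + 2 * ⟪μ x t, φs x t⟫
          + 2 * σ ^ 2 * divg (fun y => φs y t) x)
      ≤ ∫ t in Set.Icc (0:ℝ) 1, ∫ x,
        p t x * (‖φ x t‖ ^ 2 + 2 * ⟪μ x t, φ x t⟫
          + 2 * σ ^ 2 * divg (fun y => φ y t) x) := by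
  have hφmem : φ ∈ ({φ, φs} :
      Set (EuclideanSpace ℝ (Fin D) → ℝ → EuclideanSpace ℝ (Fin D))) :=
    Set.mem_insert _ _
  have hφsmem : φs ∈ ({φ, φs} :
      Set (EuclideanSpace ℝ (Fin D) → ℝ → EuclideanSpace ℝ (Fin D))) :=
    Set.mem_insert_of_mem _ rfl
  -- integrability in t of both sides
  have hIntTside : ∀ f ∈ ({φ, φs} :
      Set (EuclideanSpace ℝ (Fin D) → ℝ → EuclideanSpace ℝ (Fin D))),
      IntegrableOn (fun t => ∫ x,
        p t x * (‖f x t‖ ^ 2 + 2 * ⟪μ x t, f x t⟫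
          + 2 * σ ^ 2 * divg (fun y => f y t) x)) (Set.Icc (0:ℝ) 1) := by
    intro f hf
    obtain ⟨hT1, hT2, hT3⟩ := hIntT f hf
    have hsum : IntegrableOn (fun t => (∫ x, p t x * ‖f x t‖ ^ 2)
        + 2 * (∫ x, p t x * ⟪μ x t, f x t⟫)
        + 2 * σ ^ 2 * ∫ x, p t x * divg (fun y => f y t) x) (Set.Icc (0:ℝ) 1) :=
      (hT1.add (hT2.const_mul 2)).add (hT3.const_mul (2 * σ ^ 2))
    apply hsum.congr_fun _ measurableSet_Icc
    intro t ht
    obtain ⟨h1, h2, h3, h4⟩ := hInt f hf t ht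
    have hA : Integrable (fun x => p t x * ‖f x t‖ ^ 2
        + 2 * (p t x * ⟪μ x t, f x t⟫)) := h1.add (h2.const_mul 2)
    have hB : Integrable (fun x => 2 * σ ^ 2 * (p t x * divg (fun y => f y t) x)) :=
      h3.const_mul (2 * σ ^ 2)
    have heq : (fun x => p t x * (‖f x t‖ ^ 2 + 2 * ⟪μ x t, f x t⟫
        + 2 * σ ^ 2 * divg (fun y => f y t) x))
        = fun x => (p t x * ‖f x t‖ ^ 2 + 2 * (p t x * ⟪μ x t, f x t⟫))
          + 2 * σ ^ 2 * (p t x * divg (fun y => f y t) x) := by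
      funext x; ring
    show _ = ∫ x, p t x * (‖f x t‖ ^ 2 + 2 * ⟪μ x t, f x t⟫
        + 2 * σ ^ 2 * divg (fun y => f y t) x)
    rw [heq, integral_add hA hB, integral_add h1 (h2.const_mul 2),
      integral_const_mul, integral_const_mul]
  -- a.e. pointwise inequality in t
  apply integral_mono_ae (hIntTside φs hφsmem) (hIntTside φ hφmem)
  filter_upwards [hdiv φ hφmem, hdiv φs hφsmem,
    ae_restrict_mem measurableSet_Icc] with t hdφ hdφs ht
  obtain ⟨h1, h2, h3, h4⟩ := hInt φ hφmem t ht
  obtain ⟨g1, g2, g3, g4⟩ := hInt φs hφsmem t ht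
  have key1 := key_identity σ (p t) (hp_diff t ht) (hp_pos t ht) (fun x => μ x t)
    (fun x => φ x t) (fun x => φs x t) (fun x => hφs x t) h1 h2 h3 h4 g1 hdφ
  have key2 := key_identity σ (p t) (hp_diff t ht) (hp_pos t ht) (fun x => μ x t)
    (fun x => φs x t) (fun x => φs x t) (fun x => hφs x t) g1 g2 g3 g4 g1 hdφs
  simp only [sub_self, norm_zero] at key2
  rw [key1, key2]
  simp only [ne_eq, OfNat.ofNat_ne_zero, not_false_eq_true, zero_pow, mul_zero,
    integral_zero, zero_sub]
  have : 0 ≤ ∫ x, p t x * ‖φ x t - φs x t‖ ^ 2 := by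
    apply integral_nonneg
    intro x
    exact mul_nonneg (hp_pos t ht x).le (by positivity)
  linarith
end

section
/- Let D ≥ 1, σ > 0, and for each t ∈ [0,1] let p_t : ℝ^D → ℝ be a continuously differentiable strictly positive probability density. Let μ : ℝ^D × [0,1] → ℝ^D be continuous, set φ*(x,t) = −μ(x,t) + σ² ∇_x log p_t(x), and for continuously differentiable φ : ℝ^D × [0,1] → ℝ^D define L[φ] = ∫₀¹ ∫_{ℝ^D} p_t(x) ( ‖φ(x,t)‖² + 2 ⟪μ(x,t), φ(x,t)⟫ + 2 σ² tr J_φ(x,t) ) dx dt. Under the integrability assumptions that all integrands are integrable and that for a.e. t the divergence identity ∫_{ℝ^D} ( p_t(x) tr J_φ(x,t) + ⟪φ(x,t), ∇p_t(x)⟫ ) dx = 0 holds for φ and for φ*, one has the exact decomposition L[φ] = ∫₀¹ ∫_{ℝ^D} p_t(x) ‖φ(x,t) − φ*(x,t)‖² dx dt − ∫₀¹ ∫_{ℝ^D} p_t(x) ‖φ*(x,t)‖² dx dt. -/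
open MeasureTheory
open scoped RealInnerProductSpace

lemma grad_log_aux {F : Type*} [NormedAddCommGroup F] [InnerProductSpace ℝ F] [CompleteSpace F]
    (f : F → ℝ) (hf : ContDiff ℝ 1 f) (x : F) (hx : 0 < f x) :
    gradient (fun y => Real.log (f y)) x = (f x)⁻¹ • gradient f x := by
  have hdf : DifferentiableAt ℝ f x := (hf.differentiable one_ne_zero) x
  have h1 : fderiv ℝ (fun y => Real.log (f y)) x = (f x)⁻¹ • fderiv ℝ f x := by
    have h := (Real.hasDerivAt_log hx.ne').comp_hasFDerivAt x hdf.hasFDerivAt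
    have h2 : (fun y => Real.log (f y)) = Real.log ∘ f := rfl
    rw [h2, h.fderiv]
  unfold gradient
  rw [h1, _root_.map_smul]

/-- **Exact decomposition of the score-matching cost functional.**
With `φ*(x,t) = -μ(x,t) + σ² ∇ₓ log p_t(x)`, under integrability of all integrands and
the divergence identity for a.e. `t` (for both `φ` and `φ*`), the cost functional
`L[φ] = ∫₀¹ ∫ p_t (‖φ‖² + 2⟪μ,φ⟫ + 2σ² tr J_φ) dx dt` decomposes as
`L[φ] = ∫₀¹ ∫ p_t ‖φ - φ*‖² dx dt - ∫₀¹ ∫ p_t ‖φ*‖² dx dt`. -/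
theorem costFunctional_decomposition
    (D : ℕ) (hD : 1 ≤ D) (σ : ℝ) (hσ : 0 < σ)
    (p : ℝ → EuclideanSpace ℝ (Fin D) → ℝ)
    (hp_diff : ∀ t ∈ Set.Icc (0:ℝ) 1, ContDiff ℝ 1 (p t))
    (hp_pos : ∀ t ∈ Set.Icc (0:ℝ) 1, ∀ x, 0 < p t x)
    (hp_prob : ∀ t ∈ Set.Icc (0:ℝ) 1, ∫ x, p t x = 1)
    (μ : EuclideanSpace ℝ (Fin D) → ℝ → EuclideanSpace ℝ (Fin D))
    (hμ_cont : Continuous fun q : EuclideanSpace ℝ (Fin D) × ℝ => μ q.1 q.2)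
    (φ φs : EuclideanSpace ℝ (Fin D) → ℝ → EuclideanSpace ℝ (Fin D))
    (hφs : ∀ x t, φs x t
      = -μ x t + σ ^ 2 • gradient (fun y => Real.log (p t y)) x)
    (hφ_diff : ContDiffOn ℝ 1 (fun q : EuclideanSpace ℝ (Fin D) × ℝ => φ q.1 q.2)
      (Set.univ ×ˢ Set.Icc (0:ℝ) 1))
    -- integrability in `x` of every integrand appearing above, for both `φ` and `φ*`
    (hInt : ∀ f ∈ ({φ, φs} :
        Set (EuclideanSpace ℝ (Fin D) → ℝ → EuclideanSpace ℝ (Fin D))),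
      ∀ t ∈ Set.Icc (0:ℝ) 1,
        Integrable (fun x => p t x * ‖f x t‖ ^ 2) ∧
        Integrable (fun x => p t x * ⟪μ x t, f x t⟫) ∧
        Integrable (fun x => p t x * divg (fun y => f y t) x) ∧
        Integrable (fun x => ⟪f x t, gradient (p t) x⟫))
    -- integrability in `t` of the corresponding time integrands
    (hIntT : ∀ f ∈ ({φ, φs} :
        Set (EuclideanSpace ℝ (Fin D) → ℝ → EuclideanSpace ℝ (Fin D))),
      IntegrableOn (fun t => ∫ x, p t x * ‖f x t‖ ^ 2) (Set.Icc (0:ℝ) 1) ∧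
      IntegrableOn (fun t => ∫ x, p t x * ⟪μ x t, f x t⟫) (Set.Icc (0:ℝ) 1) ∧
      IntegrableOn (fun t => ∫ x, p t x * divg (fun y => f y t) x) (Set.Icc (0:ℝ) 1))
    -- the divergence identity, for a.e. `t ∈ [0,1]`, for both `φ` and `φ*`
    (hdiv : ∀ f ∈ ({φ, φs} :
        Set (EuclideanSpace ℝ (Fin D) → ℝ → EuclideanSpace ℝ (Fin D))),
      ∀ᵐ t ∂(volume.restrict (Set.Icc (0:ℝ) 1)),
        ∫ x, (p t x * divg (fun y => f y t) x + ⟪f x t, gradient (p t) x⟫) = 0) :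
    ∫ t in Set.Icc (0:ℝ) 1, ∫ x,
        p t x * (‖φ x t‖ ^ 2 + 2 * ⟪μ x t, φ x t⟫
          + 2 * σ ^ 2 * divg (fun y => φ y t) x)
      = (∫ t in Set.Icc (0:ℝ) 1, ∫ x, p t x * ‖φ x t - φs x t‖ ^ 2)
        - ∫ t in Set.Icc (0:ℝ) 1, ∫ x, p t x * ‖φs x t‖ ^ 2 := by
  have hφmem : φ ∈ ({φ, φs} : Set _) := Or.inl rfl
  have hφsmem : φs ∈ ({φ, φs} : Set _) := Or.inr rfl
  -- pointwise identity: p‖φ-φs‖² = p‖φ‖² + 2p⟪μ,φ⟫ - 2σ²⟪φ,∇p⟫ + p‖φs‖²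
  have hpt : ∀ t ∈ Set.Icc (0:ℝ) 1, ∀ x,
      p t x * ‖φ x t - φs x t‖ ^ 2
        = p t x * ‖φ x t‖ ^ 2 + 2 * (p t x * ⟪μ x t, φ x t⟫)
          - 2 * σ ^ 2 * ⟪φ x t, gradient (p t) x⟫ + p t x * ‖φs x t‖ ^ 2 := by
    intro t ht x
    have hgl := grad_log_aux (p t) (hp_diff t ht) x (hp_pos t ht x)
    have hne : p t x ≠ 0 := (hp_pos t ht x).ne'
    have hexp : ‖φ x t - φs x t‖ ^ 2
        = ‖φ x t‖ ^ 2 - 2 * ⟪φ x t, φs x t⟫ + ‖φs x t‖ ^ 2 := by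
      rw [@norm_sub_sq_real]
    have hips : ⟪φ x t, φs x t⟫
        = -⟪μ x t, φ x t⟫ + σ ^ 2 * ((p t x)⁻¹ * ⟪φ x t, gradient (p t) x⟫) := by
      rw [hφs, hgl, inner_add_right, inner_neg_right, real_inner_smul_right,
        real_inner_smul_right, real_inner_comm]
    rw [hexp, hips]
    field_simp
    ring
  -- the a.e.-t equality of inner integrals
  set A : ℝ → ℝ := fun t => ∫ x, p t x * ‖φ x t‖ ^ 2 with hA
  set B : ℝ → ℝ := fun t => ∫ x, p t x * ⟪μ x t, φ x t⟫ with hB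
  set C : ℝ → ℝ := fun t => ∫ x, p t x * divg (fun y => φ y t) x with hC
  set S : ℝ → ℝ := fun t => ∫ x, p t x * ‖φs x t‖ ^ 2 with hS
  set F1 : ℝ → ℝ := fun t => ∫ x, p t x * ‖φ x t - φs x t‖ ^ 2 with hF1
  have hmem_ae : ∀ᵐ t ∂(volume.restrict (Set.Icc (0:ℝ) 1)), t ∈ Set.Icc (0:ℝ) 1 :=
    ae_restrict_mem measurableSet_Icc
  have key : ∀ᵐ t ∂(volume.restrict (Set.Icc (0:ℝ) 1)),
      (F1 t = A t + 2 * B t + 2 * σ ^ 2 * C t + S t) ∧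
      (∫ x, p t x * (‖φ x t‖ ^ 2 + 2 * ⟪μ x t, φ x t⟫
          + 2 * σ ^ 2 * divg (fun y => φ y t) x)
        = A t + 2 * B t + 2 * σ ^ 2 * C t) := by
    filter_upwards [hmem_ae, hdiv φ hφmem] with t ht hdφ
    obtain ⟨i1, i2, i3, i4⟩ := hInt φ hφmem t ht
    obtain ⟨j1, j2, j3, j4⟩ := hInt φs hφsmem t ht
    have hI4 : ∫ x, ⟪φ x t, gradient (p t) x⟫ = - C t := by
      have h0 := integral_add (μ := volume) i3 i4
      rw [hdφ] at h0
      simp only [hC]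
      linarith [h0]
    constructor
    · -- F1
      have hcong : (fun x => p t x * ‖φ x t - φs x t‖ ^ 2)
          = fun x => p t x * ‖φ x t‖ ^ 2 + 2 * (p t x * ⟪μ x t, φ x t⟫)
            - 2 * σ ^ 2 * ⟪φ x t, gradient (p t) x⟫ + p t x * ‖φs x t‖ ^ 2 := by
        funext x; exact hpt t ht x
      have k1 : Integrable (fun x => p t x * ‖φ x t‖ ^ 2
          + 2 * (p t x * ⟪μ x t, φ x t⟫)) := i1.add (i2.const_mul 2)
      have k2 : Integrable (fun x => p t x * ‖φ x t‖ ^ 2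
          + 2 * (p t x * ⟪μ x t, φ x t⟫)
          - 2 * σ ^ 2 * ⟪φ x t, gradient (p t) x⟫) := k1.sub (i4.const_mul (2 * σ ^ 2))
      simp only [hF1, hA, hB, hS]
      rw [hcong]
      rw [integral_add k2 j1, integral_sub k1 (i4.const_mul (2 * σ ^ 2)),
        integral_add i1 (i2.const_mul 2), MeasureTheory.integral_const_mul, MeasureTheory.integral_const_mul]
      rw [hI4]
      simp only [hC]
      ring
    · -- LHS inner
      have hcong : (fun x => p t x * (‖φ x t‖ ^ 2 + 2 * ⟪μ x t, φ x t⟫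
            + 2 * σ ^ 2 * divg (fun y => φ y t) x))
          = fun x => p t x * ‖φ x t‖ ^ 2 + 2 * (p t x * ⟪μ x t, φ x t⟫)
            + 2 * σ ^ 2 * (p t x * divg (fun y => φ y t) x) := by
        funext x; ring
      have k1 : Integrable (fun x => p t x * ‖φ x t‖ ^ 2
          + 2 * (p t x * ⟪μ x t, φ x t⟫)) := i1.add (i2.const_mul 2)
      rw [hcong,
        integral_add k1 (i3.const_mul (2 * σ ^ 2)),
        integral_add i1 (i2.const_mul 2), MeasureTheory.integral_const_mul, MeasureTheory.integral_const_mul]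
  -- integrability in t
  obtain ⟨tA, tB, tC⟩ := hIntT φ hφmem
  obtain ⟨tS, _, _⟩ := hIntT φs hφsmem
  have hF1int : IntegrableOn F1 (Set.Icc (0:ℝ) 1) := by
    apply (((tA.add (tB.const_mul 2)).add (tC.const_mul (2 * σ ^ 2))).add tS).congr
    filter_upwards [key] with t ht
    simp only [Pi.add_apply]
    rw [ht.1]
  have hcomb : IntegrableOn (fun t => A t + 2 * B t + 2 * σ ^ 2 * C t)
      (Set.Icc (0:ℝ) 1) := by
    have := (tA.add (tB.const_mul 2)).add (tC.const_mul (2 * σ ^ 2))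
    exact this.congr (Filter.Eventually.of_forall fun t => by simp only [Pi.add_apply]; rfl)
  calc ∫ t in Set.Icc (0:ℝ) 1, ∫ x,
        p t x * (‖φ x t‖ ^ 2 + 2 * ⟪μ x t, φ x t⟫
          + 2 * σ ^ 2 * divg (fun y => φ y t) x)
      = ∫ t in Set.Icc (0:ℝ) 1, (F1 t - S t) := by
        apply integral_congr_ae
        filter_upwards [key] with t ht
        rw [ht.2, ht.1]; ring
    _ = (∫ t in Set.Icc (0:ℝ) 1, F1 t) - ∫ t in Set.Icc (0:ℝ) 1, S t :=
        integral_sub hF1int tS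
end

section
/- Let D ≥ 1 and let p : ℝ^D → ℝ be a continuously differentiable strictly positive probability density. Let φ : ℝ^D → ℝ^D be continuously differentiable with compact support. Then ∫_{ℝ^D} p(x) · tr J_φ(x) dx = − ∫_{ℝ^D} p(x) · ⟪φ(x), ∇ log p(x)⟫ dx; that is, the expectation under p of the divergence of φ equals minus the expectation under p of the inner product of φ with the score of p. -/
open MeasureTheory
open scoped RealInnerProductSpace

/-- **Divergence identity for compactly supported vector fields.**
If `p : ℝ^D → ℝ` is a `C¹` strictly positive probability density and `φ : ℝ^D → ℝ^D` is
`C¹` with compact support, then the expectation under `p` of the divergence of `φ` equals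
minus the expectation under `p` of `⟪φ, ∇ log p⟫`. -/
theorem integral_divergence_eq_neg_integral_inner_score
    (D : ℕ) (hD : 1 ≤ D)
    (p : EuclideanSpace ℝ (Fin D) → ℝ)
    (hp_diff : ContDiff ℝ 1 p)
    (hp_pos : ∀ x, 0 < p x)
    (hp_prob : ∫ x, p x = 1)
    (φ : EuclideanSpace ℝ (Fin D) → EuclideanSpace ℝ (Fin D))
    (hφ_diff : ContDiff ℝ 1 φ)
    (hφ_supp : HasCompactSupport φ) :
    ∫ x, p x * divg φ x
      = - ∫ x, p x * ⟪φ x, gradient (fun y => Real.log (p y)) x⟫ := by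
  classical
  have hp_d : Differentiable ℝ p := hp_diff.differentiable one_ne_zero
  have hφ_d : Differentiable ℝ φ := hφ_diff.differentiable one_ne_zero
  have hp_c : Continuous p := hp_diff.continuous
  have hφ_c : Continuous φ := hφ_diff.continuous
  have hfderivφ_c : Continuous (fderiv ℝ φ) := (hφ_diff.fderiv_right (m := 0) le_rfl).continuous
  have hfderivp_c : Continuous (fderiv ℝ p) := (hp_diff.fderiv_right (m := 0) le_rfl).continuous
  -- coordinate functions of φ
  set e : Fin D → EuclideanSpace ℝ (Fin D) := fun i => EuclideanSpace.single i 1 with he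
  have hφi_supp : ∀ i : Fin D, HasCompactSupport (fun x => φ x i) := fun i =>
    hφ_supp.comp_left (g := fun v : EuclideanSpace ℝ (Fin D) => v i) rfl
  have hφi_c : ∀ i : Fin D, Continuous (fun x => φ x i) := fun i =>
    (EuclideanSpace.proj i).continuous.comp hφ_c
  have hφi_d : ∀ i : Fin D, Differentiable ℝ (fun x => φ x i) := fun i =>
    (EuclideanSpace.proj (𝕜 := ℝ) i).differentiable.comp hφ_d
  have hfderivφi : ∀ (i : Fin D) (x) (v), fderiv ℝ (fun y => φ y i) x v = fderiv ℝ φ x v i := by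
    intro i x v
    have : fderiv ℝ (fun y => φ y i) x
        = (EuclideanSpace.proj (𝕜 := ℝ) i).comp (fderiv ℝ φ x) := by
      have := ((EuclideanSpace.proj (𝕜 := ℝ) i).hasFDerivAt.comp x (hφ_d x).hasFDerivAt).fderiv
      exact this
    rw [this]; rfl
  -- integrability facts
  have hI1 : ∀ i : Fin D, Integrable (fun x => p x * fderiv ℝ φ x (e i) i) := by
    intro i
    have hs : HasCompactSupport (fun x => fderiv ℝ φ x (e i) i) := by
      have h1 : HasCompactSupport (fderiv ℝ φ) := hφ_supp.fderiv ℝ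
      exact h1.comp_left
        (g := fun L : EuclideanSpace ℝ (Fin D) →L[ℝ] EuclideanSpace ℝ (Fin D) => L (e i) i) rfl
    have hc : Continuous fun x => p x * fderiv ℝ φ x (e i) i :=
      hp_c.mul (((EuclideanSpace.proj (𝕜 := ℝ) i).continuous.comp
        ((ContinuousLinearMap.apply ℝ _ (e i)).continuous.comp hfderivφ_c)))
    exact hc.integrable_of_hasCompactSupport (hs.mul_left)
  have hI2 : ∀ i : Fin D, Integrable (fun x => fderiv ℝ p x (e i) * φ x i) := by
    intro i
    have hc : Continuous fun x => fderiv ℝ p x (e i) * φ x i :=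
      (((ContinuousLinearMap.apply ℝ _ (e i)).continuous.comp hfderivp_c)).mul (hφi_c i)
    exact hc.integrable_of_hasCompactSupport ((hφi_supp i).mul_left)
  have hI3 : ∀ i : Fin D, Integrable (fun x => p x * φ x i) := fun i =>
    (hp_c.mul (hφi_c i)).integrable_of_hasCompactSupport ((hφi_supp i).mul_left)
  -- integration by parts in each coordinate
  have key : ∀ i : Fin D,
      ∫ x, p x * fderiv ℝ φ x (e i) i = - ∫ x, fderiv ℝ p x (e i) * φ x i := by
    intro i
    have := integral_mul_fderiv_eq_neg_fderiv_mul_of_integrable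
      (μ := (volume : Measure (EuclideanSpace ℝ (Fin D))))
      (f := p) (g := fun x => φ x i) (v := e i)
      (by simpa [hfderivφi] using hI2 i) (by simpa [hfderivφi] using hI1 i) (hI3 i)
      (fun x _ => hp_d x) (fun x _ => hφi_d i x)
    simpa [hfderivφi] using this
  -- gradient facts
  have hgradp : ∀ x v, fderiv ℝ p x v = ⟪gradient p x, v⟫ := by
    intro x v
    rw [gradient]
    have := (InnerProductSpace.toDual ℝ (EuclideanSpace ℝ (Fin D))).apply_symm_apply
      (fderiv ℝ p x)
    conv_lhs => rw [← this]
    simp [InnerProductSpace.toDual_apply_apply]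
  have hgrad_log : ∀ x, gradient (fun y => Real.log (p y)) x = (p x)⁻¹ • gradient p x := by
    intro x
    have hfd : fderiv ℝ (fun y => Real.log (p y)) x = (p x)⁻¹ • fderiv ℝ p x :=
      ((hp_d x).hasFDerivAt.log (hp_pos x).ne').fderiv
    rw [gradient, gradient, hfd, _root_.map_smul]
  -- pointwise identity for the RHS integrand
  have hpt : ∀ x, p x * ⟪φ x, gradient (fun y => Real.log (p y)) x⟫
      = ∑ i, fderiv ℝ p x (e i) * φ x i := by
    intro x
    rw [hgrad_log x, real_inner_smul_right, ← mul_assoc,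
      mul_inv_cancel₀ (hp_pos x).ne', one_mul]
    rw [PiLp.inner_apply]
    refine Finset.sum_congr rfl fun i _ => ?_
    have : gradient p x i = fderiv ℝ p x (e i) := by
      rw [hgradp x (e i), he]
      rw [EuclideanSpace.inner_single_right]; simp
    rw [this]
    ring_nf
    simp [RCLike.inner_apply, conj_trivial, mul_comm]
  -- put everything together
  have hL : ∫ x, p x * divg φ x = ∑ i, ∫ x, p x * fderiv ℝ φ x (e i) i := by
    rw [← integral_finset_sum _ (fun i _ => hI1 i)]
    congr 1; ext x
    simp [divg, Finset.mul_sum, he]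
  have hR : ∫ x, p x * ⟪φ x, gradient (fun y => Real.log (p y)) x⟫
      = ∑ i, ∫ x, fderiv ℝ p x (e i) * φ x i := by
    rw [← integral_finset_sum _ (fun i _ => hI2 i)]
    congr 1; ext x
    exact hpt x
  rw [hL, hR, ← Finset.sum_neg_distrib]
  exact Finset.sum_congr rfl fun i _ => key i
end

section
/- Let D ≥ 1 and let A be a symmetric real D × D matrix. Let z be a random vector in ℝ^D with i.i.d. Rademacher coordinates (each z_i takes values ±1 with probability 1/2). Then the variance of the Rademacher Hutchinson trace estimator is Var(zᵀ A z) = 2 Σ_{i ≠ j} A_{ij}² = 2 ( ‖A‖_F² − Σ_i A_{ii}² ). -/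
open MeasureTheory ProbabilityTheory

lemma aux_integrable_dirac {f : ℝ → ℝ} (hf : Measurable f) (a : ℝ) :
    Integrable f (Measure.dirac a) := by
  refine ⟨hf.aestronglyMeasurable, ?_⟩
  simp [HasFiniteIntegral, lintegral_dirac]

lemma aux_e4_ind {α : Type*} [DecidableEq α] (i j k l : α) :
    (if (i = j ∧ k = l) ∨ (i = k ∧ j = l) ∨ (i = l ∧ j = k) then (1:ℝ) else 0)
      = (if i = j then (1:ℝ) else 0) * (if k = l then (1:ℝ) else 0)
        + (if i = k then (1:ℝ) else 0) * (if j = l then (1:ℝ) else 0)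
        + (if i = l then (1:ℝ) else 0) * (if j = k then (1:ℝ) else 0)
        - 2 * ((if i = j then (1:ℝ) else 0) * ((if i = k then (1:ℝ) else 0)
            * (if i = l then (1:ℝ) else 0))) := by
  by_cases h1 : i = j <;> by_cases h2 : k = l <;> by_cases h3 : i = k <;>
    by_cases h4 : j = l <;> by_cases h5 : i = l <;> by_cases h6 : j = k <;>
    simp_all <;> norm_num

lemma aux_sum_id (D : ℕ) (A : Matrix (Fin D) (Fin D) ℝ) :
    (∑ i, ∑ j, ∑ k, ∑ l : Fin D, A i j * A k l *
      ((if i = j then (1:ℝ) else 0) * (if k = l then (1:ℝ) else 0)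
        + (if i = k then (1:ℝ) else 0) * (if j = l then (1:ℝ) else 0)
        + (if i = l then (1:ℝ) else 0) * (if j = k then (1:ℝ) else 0)
        - 2 * ((if i = j then (1:ℝ) else 0) * ((if i = k then (1:ℝ) else 0)
            * (if i = l then (1:ℝ) else 0)))))
    = (∑ i, A i i)^2 + (∑ i, ∑ j, A i j ^ 2) + (∑ i, ∑ j, A i j * A j i)
        - 2 * ∑ i, A i i ^ 2 := by
  simp only [mul_add, mul_sub, Finset.sum_add_distrib, Finset.sum_sub_distrib,
    mul_ite, ite_mul, mul_one, mul_zero, zero_mul, one_mul,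
    Finset.sum_ite_eq, Finset.sum_ite_eq', Finset.mem_univ, if_true, mul_comm,
    ite_self, Finset.sum_ite_irrel, Finset.sum_const_zero, Finset.mul_sum, Finset.sum_mul]
  simp only [pow_two, Finset.sum_mul_sum]

/-- **Variance of the Rademacher Hutchinson trace estimator.**
If `A` is a symmetric real `D × D` matrix and the coordinates `z i` are i.i.d. Rademacher
(taking values `±1` each with probability `1/2`), then
`Var(zᵀ A z) = 2 ∑_{i ≠ j} A_{ij}² = 2 (‖A‖_F² - ∑_i A_{ii}²)`. -/
theorem hutchinson_rademacher_variance
    (D : ℕ) (hD : 1 ≤ D) (A : Matrix (Fin D) (Fin D) ℝ) (hA : A.IsSymm)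
    {Ω : Type*} [MeasureSpace Ω] [IsProbabilityMeasure (ℙ : Measure Ω)]
    (z : Fin D → Ω → ℝ)
    (hmeas : ∀ i, Measurable (z i))
    (hindep : iIndepFun z ℙ)
    (hrad : ∀ i, Measure.map (z i) ℙ
      = (2 : ENNReal)⁻¹ • Measure.dirac (1 : ℝ) + (2 : ENNReal)⁻¹ • Measure.dirac (-1 : ℝ)) :
    variance (fun ω => ∑ i, ∑ j, z i ω * A i j * z j ω) ℙ
        = 2 * ∑ i, ∑ j ∈ Finset.univ.erase i, (A i j) ^ 2
      ∧ variance (fun ω => ∑ i, ∑ j, z i ω * A i j * z j ω) ℙ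
        = 2 * ((∑ i, ∑ j, (A i j) ^ 2) - ∑ i, (A i i) ^ 2) := by
  classical
  -- a.e. values of the coordinates
  have hae : ∀ i, ∀ᵐ ω ∂(ℙ : Measure Ω), z i ω = 1 ∨ z i ω = -1 := by
    intro i
    have hm : MeasurableSet ({1, -1}ᶜ : Set ℝ) :=
      (measurableSet_insert.2 (measurableSet_singleton _)).compl
    have h1 : ℙ (z i ⁻¹' ({1, -1}ᶜ : Set ℝ)) = 0 := by
      rw [← Measure.map_apply (hmeas i) hm, hrad i]
      simp [Measure.dirac_apply, Set.indicator]
    rw [ae_iff]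
    have : {ω | ¬(z i ω = 1 ∨ z i ω = -1)} = z i ⁻¹' ({1, -1}ᶜ : Set ℝ) := by
      ext ω
      simp only [Set.mem_setOf_eq, Set.mem_preimage, Set.mem_compl_iff, Set.mem_insert_iff,
        Set.mem_singleton_iff]
    rw [this]; exact h1
  -- first moment
  have hEz : ∀ i, ∫ ω, z i ω ∂ℙ = 0 := by
    intro i
    have hid : ∫ ω, z i ω ∂ℙ = ∫ x, id x ∂(Measure.map (z i) ℙ) :=
      (integral_map (hmeas i).aemeasurable aestronglyMeasurable_id).symm
    rw [hid, hrad i]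
    rw [integral_add_measure ((aux_integrable_dirac (f := id) measurable_id _).smul_measure
        (by norm_num))
      ((aux_integrable_dirac (f := id) measurable_id _).smul_measure (by norm_num)),
      integral_smul_measure, integral_smul_measure, integral_dirac, integral_dirac]
    norm_num
  -- factorization of moments of products
  have hprod : ∀ (c : Fin D → ℕ) (s : Finset (Fin D)),
      ∫ ω, ∏ m ∈ s, (z m ω) ^ (c m) ∂ℙ = ∏ m ∈ s, ∫ ω, (z m ω) ^ (c m) ∂ℙ := by
    intro c s
    induction s using Finset.induction with
    | empty => simp
    | @insert a s ha ih =>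
      have hy : iIndepFun (fun m ω => (z m ω) ^ (c m)) ℙ :=
        hindep.comp (fun m x => x ^ (c m)) (fun m => measurable_id.pow_const (c m))
      have hI : IndepFun (∏ m ∈ s, fun ω => (z m ω) ^ (c m)) (fun ω => (z a ω) ^ (c a)) ℙ :=
        hy.indepFun_finsetProd_of_notMem (fun m => (hmeas m).pow_const _) ha
      have hprodeq : (∏ m ∈ s, fun ω => (z m ω) ^ (c m))
          = fun ω => ∏ m ∈ s, (z m ω) ^ (c m) := by
        funext ω; simp [Finset.prod_apply]
      rw [hprodeq] at hI
      have hmS : AEStronglyMeasurable (fun ω => ∏ m ∈ s, (z m ω) ^ (c m)) ℙ := by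
        apply Measurable.aestronglyMeasurable
        exact Finset.measurable_prod _ (fun m _ => (hmeas m).pow_const _)
      calc ∫ ω, ∏ m ∈ insert a s, (z m ω) ^ (c m) ∂ℙ
          = ∫ ω, (∏ m ∈ s, (z m ω) ^ (c m)) * (z a ω) ^ (c a) ∂ℙ := by
            congr 1; funext ω; rw [Finset.prod_insert ha]; ring
        _ = (∫ ω, ∏ m ∈ s, (z m ω) ^ (c m) ∂ℙ) * ∫ ω, (z a ω) ^ (c a) ∂ℙ :=
            hI.integral_mul_eq_mul_integral hmS ((hmeas a).pow_const _).aestronglyMeasurable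
        _ = ∏ m ∈ insert a s, ∫ ω, (z m ω) ^ (c m) ∂ℙ := by
            rw [Finset.prod_insert ha, ih]; ring
  -- fourth (mixed) moments
  have hE4 : ∀ i j k l : Fin D, ∫ ω, z i ω * z j ω * z k ω * z l ω ∂ℙ
      = (if (i = j ∧ k = l) ∨ (i = k ∧ j = l) ∨ (i = l ∧ j = k) then (1:ℝ) else 0) := by
    intro i j k l
    have hpow : ∀ (m : Fin D) (n : ℕ),
        ∫ ω, (z m ω) ^ n ∂ℙ = if Even n then (1:ℝ) else 0 := by
      intro m n
      by_cases hn : Even n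
      · rw [if_pos hn]
        have : (fun ω => (z m ω) ^ n) =ᵐ[ℙ] (fun _ => (1:ℝ)) := by
          filter_upwards [hae m] with ω hω
          rcases hω with h | h <;> simp [h, hn.neg_one_pow]
        rw [integral_congr_ae this]; simp
      · rw [if_neg hn]
        have hodd : Odd n := Nat.odd_iff.2 (Nat.not_even_iff.1 hn)
        have : (fun ω => (z m ω) ^ n) =ᵐ[ℙ] (fun ω => z m ω) := by
          filter_upwards [hae m] with ω hω
          rcases hω with h | h <;> simp [h, hodd.neg_one_pow]
        rw [integral_congr_ae this, hEz]
    set c : Fin D → ℕ := fun m =>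
      (if m = i then 1 else 0) + (if m = j then 1 else 0)
        + (if m = k then 1 else 0) + (if m = l then 1 else 0) with hc
    have hrepr : ∀ ω, z i ω * z j ω * z k ω * z l ω = ∏ m, (z m ω) ^ (c m) := by
      intro ω
      simp only [hc, pow_add, Finset.prod_mul_distrib, pow_ite, pow_one, pow_zero,
        Finset.prod_ite_eq', Finset.mem_univ, if_pos]
    rw [integral_congr_ae (Filter.Eventually.of_forall hrepr), hprod]
    simp only [hpow]
    by_cases hχ : (i = j ∧ k = l) ∨ (i = k ∧ j = l) ∨ (i = l ∧ j = k)
    · rw [if_pos hχ]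
      apply Finset.prod_eq_one
      intro m _
      have : Even (c m) := by
        rcases hχ with ⟨h1, h2⟩ | ⟨h1, h2⟩ | ⟨h1, h2⟩ <;> subst h1 <;> subst h2 <;>
          simp only [hc] <;> split_ifs <;> decide
      rw [if_pos this]
    · rw [if_neg hχ]
      push_neg at hχ
      obtain ⟨h1, h2, h3⟩ := hχ
      by_cases hij : i = j
      · subst hij
        have hkl : k ≠ l := h1 rfl
        apply Finset.prod_eq_zero (Finset.mem_univ k)
        have : ¬ Even (c k) := by
          simp only [hc, if_pos rfl]
          split_ifs <;> simp_all <;> decide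
        rw [if_neg this]
      · by_cases hik : i = k
        · subst hik
          have hjl : j ≠ l := h2 rfl
          apply Finset.prod_eq_zero (Finset.mem_univ j)
          have : ¬ Even (c j) := by
            simp only [hc, if_pos rfl]
            split_ifs <;> simp_all <;> decide
          rw [if_neg this]
        · by_cases hil : i = l
          · subst hil
            have hjk : j ≠ k := h3 rfl
            apply Finset.prod_eq_zero (Finset.mem_univ j)
            have : ¬ Even (c j) := by
              simp only [hc, if_pos rfl]
              split_ifs <;> simp_all <;> decide
            rw [if_neg this]
          · apply Finset.prod_eq_zero (Finset.mem_univ i)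
            have : ¬ Even (c i) := by
              simp only [hc, if_pos rfl]
              split_ifs <;> simp_all <;> decide
            rw [if_neg this]
  -- boundedness and integrability
  have habs : ∀ᵐ ω ∂(ℙ : Measure Ω), ∀ i, |z i ω| = 1 := by
    rw [ae_all_iff]
    intro i
    filter_upwards [hae i] with ω hω
    rcases hω with h | h <;> simp [h]
  have hint2 : ∀ i j, Integrable (fun ω => z i ω * z j ω) ℙ := by
    intro i j
    refine Integrable.mono' (integrable_const 1)
      (((hmeas i).mul (hmeas j)).aestronglyMeasurable) ?_
    filter_upwards [habs] with ω h
    simp [abs_mul, h i, h j]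
  have hint4 : ∀ i j k l, Integrable (fun ω => z i ω * z j ω * z k ω * z l ω) ℙ := by
    intro i j k l
    refine Integrable.mono' (integrable_const 1)
      ((((hmeas i).mul (hmeas j)).mul ((hmeas k))).mul (hmeas l)).aestronglyMeasurable ?_
    filter_upwards [habs] with ω h
    simp [abs_mul, h i, h j, h k, h l]
  have hzz : ∀ i j, ∫ ω, z i ω * z j ω ∂ℙ = if i = j then (1:ℝ) else 0 := by
    intro i j
    by_cases hij : i = j
    · subst hij
      rw [if_pos rfl]
      have : (fun ω => z i ω * z i ω) =ᵐ[ℙ] (fun _ => (1:ℝ)) := by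
        filter_upwards [hae i] with ω hω
        rcases hω with h | h <;> simp [h]
      rw [integral_congr_ae this]; simp
    · rw [if_neg hij]
      have h := (hindep.indepFun hij).integral_mul_eq_mul_integral
        (hmeas i).aestronglyMeasurable (hmeas j).aestronglyMeasurable
      rw [show (fun ω => z i ω * z j ω) = z i * z j from rfl, h, hEz i, zero_mul]
  have hintm : ∀ i j, Integrable (fun ω => z i ω * A i j * z j ω) ℙ := by
    intro i j
    have h1 := (hint2 i j).const_mul (A i j)
    have h2 : (fun ω => A i j * (z i ω * z j ω)) = fun ω => z i ω * A i j * z j ω := by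
      funext ω; ring
    rwa [h2] at h1
  -- the estimator
  set f : Ω → ℝ := fun ω => ∑ i, ∑ j, z i ω * A i j * z j ω with hfdef
  have hMem : MemLp f 2 ℙ := by
    refine MemLp.of_bound ?_ (∑ i, ∑ j, |A i j|) ?_
    · exact (Finset.measurable_sum _ (fun i _ => Finset.measurable_sum _
        (fun j _ => ((hmeas i).mul_const _).mul (hmeas j)))).aestronglyMeasurable
    · filter_upwards [habs] with ω h
      calc ‖f ω‖
          ≤ ∑ i, ‖∑ j, z i ω * A i j * z j ω‖ := norm_sum_le _ _
        _ ≤ ∑ i, ∑ j, ‖z i ω * A i j * z j ω‖ :=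
            Finset.sum_le_sum (fun i _ => norm_sum_le _ _)
        _ = ∑ i, ∑ j, |A i j| := by
            refine Finset.sum_congr rfl fun i _ => Finset.sum_congr rfl fun j _ => ?_
            simp [Real.norm_eq_abs, abs_mul, h i, h j]
  -- mean
  have hEf : ∫ ω, f ω ∂ℙ = ∑ i, A i i := by
    rw [hfdef]
    rw [integral_finset_sum _ (fun i _ => integrable_finset_sum _ (fun j _ => hintm i j))]
    have : ∀ i, ∫ ω, (∑ j, z i ω * A i j * z j ω) ∂ℙ
        = ∑ j, A i j * (if i = j then (1:ℝ) else 0) := by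
      intro i
      rw [integral_finset_sum _ (fun j _ => hintm i j)]
      refine Finset.sum_congr rfl fun j _ => ?_
      rw [← hzz i j, ← integral_const_mul]
      congr 1; funext ω; ring
    simp only [this, mul_ite, mul_one, mul_zero, Finset.sum_ite_eq, Finset.mem_univ, if_true]
  -- second moment
  have hEf2 : ∫ ω, f ω ^ 2 ∂ℙ
      = (∑ i, A i i)^2 + (∑ i, ∑ j, A i j ^ 2) + (∑ i, ∑ j, A i j * A j i)
          - 2 * ∑ i, A i i ^ 2 := by
    have hexp : ∀ ω, f ω ^ 2
        = ∑ i, ∑ j, ∑ k, ∑ l, A i j * A k l * (z i ω * z j ω * z k ω * z l ω) := by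
      intro ω
      calc f ω ^ 2
          = ∑ i, ∑ k, (∑ j, z i ω * A i j * z j ω) * (∑ l, z k ω * A k l * z l ω) := by
            rw [hfdef, sq, Finset.sum_mul_sum]
        _ = ∑ i, ∑ k, ∑ j, ∑ l, A i j * A k l * (z i ω * z j ω * z k ω * z l ω) := by
            refine Finset.sum_congr rfl fun i _ => Finset.sum_congr rfl fun k _ => ?_
            rw [Finset.sum_mul_sum]
            exact Finset.sum_congr rfl fun j _ => Finset.sum_congr rfl fun l _ => by ring
        _ = ∑ i, ∑ j, ∑ k, ∑ l, A i j * A k l * (z i ω * z j ω * z k ω * z l ω) :=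
            Finset.sum_congr rfl fun i _ => Finset.sum_comm
    calc ∫ ω, f ω ^ 2 ∂ℙ
        = ∫ ω, ∑ i, ∑ j, ∑ k, ∑ l, A i j * A k l * (z i ω * z j ω * z k ω * z l ω) ∂ℙ := by
          congr 1; funext ω; exact hexp ω
      _ = ∑ i, ∑ j, ∑ k, ∑ l, A i j * A k l * ∫ ω, z i ω * z j ω * z k ω * z l ω ∂ℙ := by
          rw [integral_finset_sum _ (fun i _ => integrable_finset_sum _ (fun j _ =>
            integrable_finset_sum _ (fun k _ => integrable_finset_sum _ (fun l _ =>
              (hint4 i j k l).const_mul _))))]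
          refine Finset.sum_congr rfl fun i _ => ?_
          rw [integral_finset_sum _ (fun j _ => integrable_finset_sum _ (fun k _ =>
            integrable_finset_sum _ (fun l _ => (hint4 i j k l).const_mul _)))]
          refine Finset.sum_congr rfl fun j _ => ?_
          rw [integral_finset_sum _ (fun k _ => integrable_finset_sum _ (fun l _ =>
            (hint4 i j k l).const_mul _))]
          refine Finset.sum_congr rfl fun k _ => ?_
          rw [integral_finset_sum _ (fun l _ => (hint4 i j k l).const_mul _)]
          exact Finset.sum_congr rfl fun l _ => integral_const_mul _ _
      _ = ∑ i, ∑ j, ∑ k, ∑ l : Fin D, A i j * A k l *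
            ((if i = j then (1:ℝ) else 0) * (if k = l then (1:ℝ) else 0)
              + (if i = k then (1:ℝ) else 0) * (if j = l then (1:ℝ) else 0)
              + (if i = l then (1:ℝ) else 0) * (if j = k then (1:ℝ) else 0)
              - 2 * ((if i = j then (1:ℝ) else 0) * ((if i = k then (1:ℝ) else 0)
                  * (if i = l then (1:ℝ) else 0)))) := by
          refine Finset.sum_congr rfl fun i _ => Finset.sum_congr rfl fun j _ =>
            Finset.sum_congr rfl fun k _ => Finset.sum_congr rfl fun l _ => ?_
          rw [hE4 i j k l, aux_e4_ind i j k l]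
      _ = (∑ i, A i i)^2 + (∑ i, ∑ j, A i j ^ 2) + (∑ i, ∑ j, A i j * A j i)
            - 2 * ∑ i, A i i ^ 2 := aux_sum_id D A
  -- symmetry
  have hsymm : (∑ i, ∑ j, A i j * A j i) = ∑ i, ∑ j, A i j ^ 2 := by
    refine Finset.sum_congr rfl fun i _ => Finset.sum_congr rfl fun j _ => ?_
    rw [← hA.apply i j]; ring
  -- variance
  have hvar : variance f ℙ = 2 * ((∑ i, ∑ j, (A i j) ^ 2) - ∑ i, (A i i) ^ 2) := by
    rw [variance_eq_sub hMem]
    have h2 : (ℙ : Measure Ω)[f ^ 2] = ∫ ω, f ω ^ 2 ∂ℙ := by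
      congr 1
    rw [h2, hEf2, hEf, hsymm]
    ring
  constructor
  · rw [hvar]
    congr 1
    have : ∀ i : Fin D, ∑ j ∈ Finset.univ.erase i, (A i j) ^ 2
        = (∑ j, (A i j) ^ 2) - (A i i) ^ 2 := by
      intro i
      have h := Finset.add_sum_erase Finset.univ (fun j => (A i j) ^ 2) (Finset.mem_univ i)
      rw [eq_sub_iff_add_eq, add_comm]
      exact h
    rw [Finset.sum_congr rfl (fun i _ => this i), Finset.sum_sub_distrib]
  · exact hvar
end

section
/- Reverse-time Fokker–Planck / Nelson drift relation: let D ≥ 1, σ > 0, let μ : ℝ^D × [0,1] → ℝ^D be continuously differentiable, and let p : [0,1] × ℝ^D → ℝ be twice continuously differentiable in x, continuously differentiable in t, strictly positive, and satisfy the Fokker–Planck equation ∂_t p(t,x) = − div_x( μ(x,t) p(t,x) ) + (σ²/2) Δ_x p(t,x) for all (t,x) ∈ [0,1] × ℝ^D. Define the time-reversed density q(τ, x) = p(1 − τ, x) and the backward drift ν(x, τ) = − μ(x, 1 − τ) + σ² ∇_x log p(1 − τ, x). Then q satisfies the Fokker–Planck equation with drift ν: ∂_τ q(τ,x) = − div_x(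 ν(x,τ) q(τ,x) ) + (σ²/2) Δ_x q(τ,x) for all (τ,x) ∈ [0,1] × ℝ^D. -/
open MeasureTheory
open scoped RealInnerProductSpace

/-- The Laplacian of a scalar field `f : ℝ^D → ℝ`: `Δf(x) = ∑ i ∂²ᵢ f(x)`. -/
noncomputable def lapl {D : ℕ}
    (f : EuclideanSpace ℝ (Fin D) → ℝ)
    (x : EuclideanSpace ℝ (Fin D)) : ℝ :=
  ∑ i, fderiv ℝ (fun y => fderiv ℝ f y (EuclideanSpace.single i 1)) x
    (EuclideanSpace.single i 1)

section Aux

variable {D : ℕ}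

private lemma euclid_apply_eq_inner (v : EuclideanSpace ℝ (Fin D)) (i : Fin D) :
    v i = ⟪v, EuclideanSpace.single i (1:ℝ)⟫ := by
  rw [EuclideanSpace.inner_single_right]; simp

private lemma gradient_apply' (f : EuclideanSpace ℝ (Fin D) → ℝ)
    (x : EuclideanSpace ℝ (Fin D)) (i : Fin D) :
    gradient f x i = fderiv ℝ f x (EuclideanSpace.single i 1) := by
  rw [euclid_apply_eq_inner (gradient f x) i, gradient, InnerProductSpace.toDual_symm_apply]

private lemma contDiff_gradient (f : EuclideanSpace ℝ (Fin D) → ℝ)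
    (hf : ContDiff ℝ 2 f) : ContDiff ℝ 1 (fun y => gradient f y) := by
  have h1 : ContDiff ℝ 1 (fun y => fderiv ℝ f y) := hf.fderiv_right (by norm_num)
  exact ((InnerProductSpace.toDual ℝ (EuclideanSpace ℝ (Fin D))).symm.contDiff).comp h1

private lemma divg_gradient (f : EuclideanSpace ℝ (Fin D) → ℝ)
    (hf : ContDiff ℝ 2 f) (x : EuclideanSpace ℝ (Fin D)) :
    divg (fun y => gradient f y) x = lapl f x := by
  unfold divg lapl
  refine Finset.sum_congr rfl fun i _ => ?_
  have hgrad : DifferentiableAt ℝ (fun y => gradient f y) x :=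
    ((contDiff_gradient f hf).differentiable one_ne_zero).differentiableAt
  set l : EuclideanSpace ℝ (Fin D) →L[ℝ] ℝ :=
    innerSL ℝ (EuclideanSpace.single i (1:ℝ)) with hl
  have h1 : (fun y => fderiv ℝ f y (EuclideanSpace.single i 1))
      = fun y => l (gradient f y) := by
    funext y
    rw [hl, innerSL_apply_apply, real_inner_comm, ← euclid_apply_eq_inner, gradient_apply']
  rw [h1]
  have h2 : fderiv ℝ (fun y => l (gradient f y)) x
      = l.comp (fderiv ℝ (fun y => gradient f y) x) :=
    (l.hasFDerivAt.comp x hgrad.hasFDerivAt).fderiv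
  rw [h2, ContinuousLinearMap.comp_apply, hl, innerSL_apply_apply,
    EuclideanSpace.inner_single_left]
  simp

private lemma gradient_log (f : EuclideanSpace ℝ (Fin D) → ℝ)
    (y : EuclideanSpace ℝ (Fin D)) (hf : DifferentiableAt ℝ f y) (h0 : f y ≠ 0) :
    gradient (fun z => Real.log (f z)) y = (f y)⁻¹ • gradient f y := by
  unfold gradient
  rw [(hf.hasFDerivAt.log h0).fderiv]
  exact (InnerProductSpace.toDual ℝ (EuclideanSpace ℝ (Fin D))).symm.map_smul _ _

private lemma divg_neg_add_smul (f g : EuclideanSpace ℝ (Fin D) → EuclideanSpace ℝ (Fin D))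
    (x : EuclideanSpace ℝ (Fin D)) (c : ℝ)
    (hf : DifferentiableAt ℝ f x) (hg : DifferentiableAt ℝ g x) :
    divg (fun y => -(f y) + c • g y) x = -divg f x + c * divg g x := by
  unfold divg
  rw [fderiv_fun_add (f := fun y => -f y) (g := fun y => c • g y) hf.neg (hg.const_smul c), fderiv_fun_neg, fderiv_fun_const_smul hg]
  simp only [ContinuousLinearMap.add_apply, ContinuousLinearMap.neg_apply,
    ContinuousLinearMap.smul_apply, PiLp.add_apply, PiLp.neg_apply, PiLp.smul_apply,
    smul_eq_mul]
  rw [Finset.sum_add_distrib, ← Finset.sum_neg_distrib, ← Finset.mul_sum]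

end Aux

/-- **Reverse-time Fokker–Planck / Nelson drift relation.**
If the strictly positive density `p` (C² in `x`, C¹ in `t` on `[0,1]`) solves the
Fokker–Planck equation `∂ₜ p = -div(μ p) + (σ²/2) Δp` on `[0,1] × ℝ^D` with `C¹` drift
`μ`, then the time-reversed density `q(τ,x) = p(1-τ,x)` solves the Fokker–Planck
equation with the backward drift `ν(x,τ) = -μ(x,1-τ) + σ² ∇ₓ log p(1-τ,x)`:
`∂_τ q = -div(ν q) + (σ²/2) Δq` on `[0,1] × ℝ^D`. -/
theorem reverse_time_fokker_planck
    (D : ℕ) (hD : 1 ≤ D) (σ : ℝ) (hσ : 0 < σ)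
    (μ : EuclideanSpace ℝ (Fin D) → ℝ → EuclideanSpace ℝ (Fin D))
    (hμ : ContDiff ℝ 1 fun q : EuclideanSpace ℝ (Fin D) × ℝ => μ q.1 q.2)
    (p : ℝ → EuclideanSpace ℝ (Fin D) → ℝ)
    (hp_x : ∀ t ∈ Set.Icc (0:ℝ) 1, ContDiff ℝ 2 (p t))
    (hp_t : ∀ x, ContDiffOn ℝ 1 (fun t => p t x) (Set.Icc (0:ℝ) 1))
    (hp_pos : ∀ t ∈ Set.Icc (0:ℝ) 1, ∀ x, 0 < p t x)
    (hFP : ∀ t ∈ Set.Icc (0:ℝ) 1, ∀ x,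
      derivWithin (fun s => p s x) (Set.Icc (0:ℝ) 1) t
        = -divg (fun y => p t y • μ y t) x + σ ^ 2 / 2 * lapl (p t) x)
    (q : ℝ → EuclideanSpace ℝ (Fin D) → ℝ)
    (hq : ∀ τ x, q τ x = p (1 - τ) x)
    (ν : EuclideanSpace ℝ (Fin D) → ℝ → EuclideanSpace ℝ (Fin D))
    (hν : ∀ x τ, ν x τ = -μ x (1 - τ)
      + σ ^ 2 • gradient (fun y => Real.log (p (1 - τ) y)) x) :
    ∀ τ ∈ Set.Icc (0:ℝ) 1, ∀ x,
      derivWithin (fun s => q s x) (Set.Icc (0:ℝ) 1) τ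
        = -divg (fun y => q τ y • ν y τ) x + σ ^ 2 / 2 * lapl (q τ) x := by
  intro τ hτ x
  have ht : (1:ℝ) - τ ∈ Set.Icc (0:ℝ) 1 := ⟨by linarith [hτ.2], by linarith [hτ.1]⟩
  have hf2 : ContDiff ℝ 2 (p (1 - τ)) := hp_x _ ht
  have hpos : ∀ y, 0 < p (1 - τ) y := hp_pos _ ht
  have hμt : ContDiff ℝ 1 (fun y => μ y (1 - τ)) :=
    hμ.comp (contDiff_id.prodMk contDiff_const)
  have hq2 : q τ = p (1 - τ) := funext fun y => hq τ y
  -- time derivative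
  have key : derivWithin (fun s => q s x) (Set.Icc (0:ℝ) 1) τ
      = - derivWithin (fun t => p t x) (Set.Icc (0:ℝ) 1) (1 - τ) := by
    have hq1 : (fun s => q s x) = fun s => p (1 - s) x := funext fun s => hq s x
    rw [hq1]
    have hd : DifferentiableWithinAt ℝ (fun t => p t x) (Set.Icc (0:ℝ) 1) (1 - τ) :=
      ((hp_t x).differentiableOn one_ne_zero) _ ht
    have h1 : HasDerivWithinAt (fun t => p t x)
        (derivWithin (fun t => p t x) (Set.Icc (0:ℝ) 1) (1 - τ)) (Set.Icc (0:ℝ) 1) (1 - τ) :=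
      hd.hasDerivWithinAt
    have h2 : HasDerivWithinAt (fun s : ℝ => 1 - s) (-1) (Set.Icc (0:ℝ) 1) τ := by
      simpa using ((hasDerivAt_id τ).const_sub 1).hasDerivWithinAt
    have hmaps : Set.MapsTo (fun s : ℝ => 1 - s) (Set.Icc (0:ℝ) 1) (Set.Icc (0:ℝ) 1) := by
      intro s hs
      simp only [Set.mem_Icc] at hs ⊢
      constructor <;> linarith [hs.1, hs.2]
    have h3 := h1.comp τ h2 hmaps
    have h4 := h3.derivWithin ((uniqueDiffOn_Icc one_pos) τ hτ)
    simpa [Function.comp_def, mul_comm] using h4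
  -- the vector field identity
  have hfield : (fun y => q τ y • ν y τ)
      = fun y => -(p (1 - τ) y • μ y (1 - τ)) + σ ^ 2 • gradient (p (1 - τ)) y := by
    funext y
    rw [hq2, hν]
    have hgl : gradient (fun z => Real.log (p (1 - τ) z)) y
        = (p (1 - τ) y)⁻¹ • gradient (p (1 - τ)) y :=
      gradient_log _ _ ((hf2.differentiable two_ne_zero).differentiableAt) (hpos y).ne'
    have hne : p (1 - τ) y ≠ 0 := (hpos y).ne'
    rw [hgl, smul_add, smul_neg, smul_smul, smul_smul, mul_comm (p (1 - τ) y) (σ ^ 2),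
      mul_assoc, mul_inv_cancel₀ hne, mul_one]
  -- differentiability of the pieces
  have hA : DifferentiableAt ℝ (fun y => p (1 - τ) y • μ y (1 - τ)) x :=
    (((hf2.of_le one_le_two).smul hμt).differentiable one_ne_zero).differentiableAt
  have hG : DifferentiableAt ℝ (fun y => gradient (p (1 - τ)) y) x :=
    ((contDiff_gradient _ hf2).differentiable one_ne_zero).differentiableAt
  have hdiv : divg (fun y => q τ y • ν y τ) x
      = -divg (fun y => p (1 - τ) y • μ y (1 - τ)) x + σ ^ 2 * lapl (p (1 - τ)) x := by
    rw [hfield, divg_neg_add_smul _ _ _ _ hA hG, divg_gradient _ hf2]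
  rw [key, hFP _ ht x, hdiv, hq2]
  ring
end
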